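/- With R and I as above, the composition of the quotient map R → R/I with the ring homomorphism induced by s ↦ 1, t ↦ 1 lands in ℤ/2, and the image of any element Σᵢ εᵢ s^{nᵢ} t^{mᵢ} (with εᵢ = ±1) equals the parity of the number of summands; in particular if this parity is even, then the class of the element in R/I is either 0 or 1 + t. -/

import Mathlib

noncomputable section

abbrev R2 : Type := AddMonoidAlgebra ℤ (ℤ × ℤ)

def mono (n m : ℤ) : R2 := AddMonoidAlgebra.single (n, m) 1

def Igen : Set R2 :=
  {x | ∃ n : ℤ, x = mono n n - mono n 0} ∪
  {x | ∃ n m : ℤ, x = mono n m + mono (-n) (m - n)} ∪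
  {x | ∃ n m : ℤ, x = mono n m + mono m n} ∪
  {x | ∃ n m : ℤ, x = mono n m * (1 - mono 0 1) ^ 2}

def I : AddSubgroup R2 := AddSubgroup.closure Igen

abbrev A2 : Type := AddMonoidAlgebra (ZMod 2) (ZMod 2)

def tA (k : ZMod 2) : A2 := AddMonoidAlgebra.single k 1

def Jf (n m : ℤ) : ZMod 2 := ((n + n * m + m : ℤ) : ZMod 2)

def phi : R2 →ₗ[ℤ] A2 :=
  Finsupp.lsum ℤ (fun p : ℤ × ℤ => LinearMap.toSpanSingleton ℤ A2 (tA (Jf p.1 p.2))) ∘ₗ (AddMonoidAlgebra.coeffLinearEquiv ℤ).toLinearMap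

def epsA : A2 →ₐ[ZMod 2] ZMod 2 := (AddMonoidAlgebra.lift (ZMod 2) (ZMod 2) (ZMod 2)) 1

def ev1 : LaurentPolynomial ℤ →ₗ[ℤ] ℤ := Finsupp.lsum ℤ (fun _ : ℤ => (LinearMap.id : ℤ →ₗ[ℤ] ℤ)) ∘ₗ (AddMonoidAlgebra.coeffLinearEquiv ℤ).toLinearMap

def lder : LaurentPolynomial ℤ →ₗ[ℤ] LaurentPolynomial ℤ :=
  Finsupp.lsum ℤ (fun n : ℤ =>
    LinearMap.toSpanSingleton ℤ (LaurentPolynomial ℤ) ((n : ℤ) • LaurentPolynomial.T (n - 1))) ∘ₗ (AddMonoidAlgebra.coeffLinearEquiv ℤ).toLinearMap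

def ev2 : R2 →ₗ[ℤ] ZMod 2 :=
  Finsupp.lsum ℤ (fun _ : ℤ × ℤ => LinearMap.toSpanSingleton ℤ (ZMod 2) 1) ∘ₗ (AddMonoidAlgebra.coeffLinearEquiv ℤ).toLinearMap

lemma mono_mul (a b c d : ℤ) : mono a b * mono c d = mono (a+c) (b+d) := by
  simp only [mono]
  rw [AddMonoidAlgebra.single_mul_single]
  norm_num [Prod.mk_add_mk]

lemma g4_eq (n m : ℤ) : mono n m * (1 - mono 0 1)^2 = mono n m - 2 • mono n (m+1) + mono n (m+2) := by
  have c1 : mono n m * (1 - mono 0 1)^2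
      = mono n m * 1 - 2 * (mono n m * mono 0 1) + (mono n m * mono 0 1) * mono 0 1 := by ring
  rw [c1, mul_one, mono_mul, mono_mul]
  norm_num
  rw [show m + 1 + 1 = m + 2 by ring]

lemma hG1 (n : ℤ) : mono n n - mono n 0 ∈ I :=
  AddSubgroup.subset_closure (Or.inl (Or.inl (Or.inl ⟨n, rfl⟩)))
lemma hG2 (n m : ℤ) : mono n m + mono (-n) (m - n) ∈ I :=
  AddSubgroup.subset_closure (Or.inl (Or.inl (Or.inr ⟨n, m, rfl⟩)))
lemma hG3 (n m : ℤ) : mono n m + mono m n ∈ I :=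
  AddSubgroup.subset_closure (Or.inl (Or.inr ⟨n, m, rfl⟩))
lemma hG4 (n m : ℤ) : mono n m - 2 • mono n (m+1) + mono n (m+2) ∈ I := by
  rw [← g4_eq]
  exact AddSubgroup.subset_closure (Or.inr ⟨n, m, rfl⟩)

-- 2 • mono ∈ I
lemma t2_0 (m : ℤ) : (2:ℤ) • mono 0 m ∈ I := by
  have := hG2 0 m
  simpa [two_smul] using this
lemma t2_nn (n : ℤ) : (2:ℤ) • mono n n ∈ I := by
  have := hG3 n n
  simpa [two_smul] using this
lemma t2_n0 (n : ℤ) : (2:ℤ) • mono n 0 ∈ I := by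
  have h : (2:ℤ) • mono n 0 = (-(2:ℤ)) • (mono n n - mono n 0) + (2:ℤ) • mono n n := by
    simp [smul_sub]
  rw [h]
  exact I.add_mem (I.zsmul_mem (hG1 n) _) (t2_nn n)

lemma step_up {n m : ℤ} (h0 : (2:ℤ) • mono n m ∈ I) (h1 : (2:ℤ) • mono n (m+1) ∈ I) :
    (2:ℤ) • mono n (m+2) ∈ I := by
  have h : (2:ℤ) • mono n (m+2) =
      (2:ℤ) • (mono n m - 2 • mono n (m+1) + mono n (m+2))
      - (2:ℤ) • mono n m + (2:ℤ) • ((2:ℤ) • mono n (m+1)) := by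
    simp [smul_sub, smul_add, smul_smul]; abel
  rw [h]
  exact I.add_mem (I.sub_mem (I.zsmul_mem (hG4 n m) _) h0) (I.zsmul_mem h1 _)

lemma step_down {n m : ℤ} (h1 : (2:ℤ) • mono n (m+1) ∈ I) (h2 : (2:ℤ) • mono n (m+2) ∈ I) :
    (2:ℤ) • mono n m ∈ I := by
  have h : (2:ℤ) • mono n m =
      (2:ℤ) • (mono n m - 2 • mono n (m+1) + mono n (m+2))
      + (2:ℤ) • ((2:ℤ) • mono n (m+1)) - (2:ℤ) • mono n (m+2) := by
    simp [smul_sub, smul_add, smul_smul]; abel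
  rw [h]
  exact I.sub_mem (I.add_mem (I.zsmul_mem (hG4 n m) _) (I.zsmul_mem h1 _)) h2

lemma row (n : ℤ) (h0 : (2:ℤ) • mono n 0 ∈ I) (h1 : (2:ℤ) • mono n 1 ∈ I) :
    ∀ m : ℤ, (2:ℤ) • mono n m ∈ I := by
  have key : ∀ m : ℤ, (2:ℤ) • mono n m ∈ I ∧ (2:ℤ) • mono n (m+1) ∈ I := by
    intro m
    induction m using Int.induction_on with
    | zero => exact ⟨h0, by rw [zero_add]; exact h1⟩
    | succ k ih =>
      refine ⟨ih.2, ?_⟩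
      have := step_up ih.1 ih.2
      have e : ((k:ℤ)+1)+1 = (k:ℤ)+2 := by ring
      rw [e]; exact this
    | pred k ih =>
      have e1 : (-(k:ℤ)-1)+1 = -(k:ℤ) := by ring
      have e2 : (-(k:ℤ)-1)+2 = -(k:ℤ)+1 := by ring
      refine ⟨?_, by rw [e1]; exact ih.1⟩
      have := step_down (m := -(k:ℤ)-1) (by rw [e1]; exact ih.1) (by rw [e2]; exact ih.2)
      exact this
  exact fun m => (key m).1

lemma two_mem (n m : ℤ) : (2:ℤ) • mono n m ∈ I := by
  have row1 : ∀ m : ℤ, (2:ℤ) • mono 1 m ∈ I := row 1 (t2_n0 1) (t2_nn 1)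
  have tn1 : ∀ n : ℤ, (2:ℤ) • mono n 1 ∈ I := by
    intro n
    have h : (2:ℤ) • mono n 1 = (2:ℤ) • (mono n 1 + mono 1 n) - (2:ℤ) • mono 1 n := by
      simp [smul_add]
    rw [h]
    exact I.sub_mem (I.zsmul_mem (hG3 n 1) _) (row1 n)
  exact row n (t2_n0 n) (tn1 n) m

lemma ctrans {x y z : R2} (h1 : x - y ∈ I) (h2 : y - z ∈ I) : x - z ∈ I := by
  have := I.add_mem h1 h2
  simpa using this

lemma plus_to_minus {a b c d : ℤ} (h : mono a b + mono c d ∈ I) : mono a b - mono c d ∈ I := by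
  have h2 := two_mem c d
  have e : mono a b - mono c d = (mono a b + mono c d) - (2:ℤ) • mono c d := by
    simp [two_smul]
  rw [e]; exact I.sub_mem h h2

lemma minus_comm {a b c d : ℤ} (h : mono a b - mono c d ∈ I) : mono c d - mono a b ∈ I := by
  have := I.neg_mem h
  simpa using this

lemma red2 (n m : ℤ) : mono n (m+2) - mono n m ∈ I := by
  have e : mono n (m+2) - mono n m =
      (mono n m - 2 • mono n (m+1) + mono n (m+2)) + (2:ℤ) • mono n (m+1)
      - (2:ℤ) • mono n m := by
    simp [two_smul]; abel
  rw [e]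
  exact I.sub_mem (I.add_mem (hG4 n m) (two_mem n (m+1))) (two_mem n m)

lemma redpar (n : ℤ) : ∀ (r : ℤ) (k : ℤ), mono n (r + 2*k) - mono n r ∈ I := by
  intro r k
  induction k using Int.induction_on with
  | zero => simpa using I.zero_mem
  | succ j ih =>
    have e : r + 2*((j:ℤ)+1) = (r + 2*j) + 2 := by ring
    rw [e]
    exact ctrans (red2 n (r + 2*j)) ih
  | pred j ih =>
    have h := minus_comm (red2 n (r + 2*((-(j:ℤ)-1))))
    rw [show r + 2*((-(j:ℤ)-1)) + 2 = r + 2*(-(j:ℤ)) from by ring] at h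
    exact ctrans h ih

lemma mod2red (n m : ℤ) : mono n m - mono n (m % 2) ∈ I := by
  have e : m = m % 2 + 2 * (m / 2) := by
    rw [Int.emod_add_mul_ediv]
  nth_rewrite 1 [e]
  exact redpar n (m % 2) (m / 2)

lemma n0red (n : ℤ) : mono n 0 - mono 0 n ∈ I := plus_to_minus (hG3 n 0)

/-- class value: 1 if m odd else n % 2 -/
def clv (n m : ℤ) : ℤ := if m % 2 = 0 then n % 2 else 1

lemma mod2cases (n : ℤ) : n % 2 = 0 ∨ n % 2 = 1 := Int.emod_two_eq_zero_or_one n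

lemma n1red (n : ℤ) : mono n 1 - mono 0 1 ∈ I := by
  have h1 : mono n 1 - mono 1 n ∈ I := plus_to_minus (hG3 n 1)
  have h2 : mono 1 n - mono 1 (n % 2) ∈ I := mod2red 1 n
  have h3 : mono 1 (n % 2) - mono 0 1 ∈ I := by
    rcases mod2cases n with h | h <;> rw [h]
    · exact plus_to_minus (hG3 1 0)
    · exact ctrans (hG1 1) (plus_to_minus (hG3 1 0))
  exact ctrans h1 (ctrans h2 h3)

lemma class_red (n m : ℤ) : mono n m - mono 0 (clv n m) ∈ I := by
  have h1 : mono n m - mono n (m % 2) ∈ I := mod2red n m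
  unfold clv
  rcases mod2cases m with h | h <;> rw [h] at h1 ⊢
  · norm_num
    exact ctrans h1 (ctrans (n0red n) (mod2red 0 n))
  · norm_num
    exact ctrans h1 (n1red n)

lemma ev2_mono (n m : ℤ) : ev2 (mono n m) = 1 := by
  rw [ev2, mono, AddMonoidAlgebra.single]
  erw [LinearMap.comp_apply]
  erw [Finsupp.lsum_single (S := ℤ)]
  simp

lemma ev2_I {x : R2} (hx : x ∈ I) : ev2 x = 0 := by
  refine AddSubgroup.closure_induction (fun y hy => ?_) (by simp)
    (fun a b _ _ iha ihb => by rw [map_add, iha, ihb, add_zero])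
    (fun a _ iha => by rw [map_neg, iha, neg_zero]) hx
  rcases hy with ((⟨n, rfl⟩ | ⟨n, m, rfl⟩) | ⟨n, m, rfl⟩) | ⟨n, m, rfl⟩
  · rw [map_sub, ev2_mono, ev2_mono, sub_self]
  · rw [map_add, ev2_mono, ev2_mono]; decide
  · rw [map_add, ev2_mono, ev2_mono]; decide
  · rw [g4_eq, map_add, map_sub, map_nsmul, ev2_mono, ev2_mono, ev2_mono]; decide

lemma one_eq : (1 : R2) = mono 0 0 := by simp [mono]; rfl

lemma even_nsmul_mem {a : ℕ} (h : Even a) (n m : ℤ) : a • mono n m ∈ I := by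
  obtain ⟨q, hq⟩ := h
  have e : (a:ℤ) • mono n m = (q:ℤ) • ((2:ℤ) • mono n m) := by
    rw [smul_smul, show (q:ℤ)*2 = (a:ℤ) from by omega]
  rw [← natCast_zsmul, e]
  exact I.zsmul_mem (two_mem n m) _

theorem stmt19aux (k : ℕ) (ε : Fin k → ℤ) (n m : Fin k → ℤ) (hε : ∀ i, ε i = 1 ∨ ε i = -1) :
      ev2 (∑ i, ε i • mono (n i) (m i)) = (k : ZMod 2) ∧
      (Even k →
        (∑ i, ε i • mono (n i) (m i)) ∈ I ∨
        (∑ i, ε i • mono (n i) (m i)) - (1 + mono 0 1) ∈ I) := by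
  constructor
  · rw [map_sum]
    have : ∀ i : Fin k, ev2 (ε i • mono (n i) (m i)) = 1 := by
      intro i
      rw [map_smul, ev2_mono]
      rcases hε i with h | h <;> rw [h] <;> norm_num <;> decide
    rw [Finset.sum_congr rfl (fun i _ => this i)]
    simp
  · intro hk
    set c : Fin k → ℤ := fun i => clv (n i) (m i) with hc
    have H1 : (∑ i, ε i • mono (n i) (m i)) - (∑ i, mono 0 (c i)) ∈ I := by
      rw [← Finset.sum_sub_distrib]
      apply AddSubgroup.sum_mem
      intro i _
      rcases hε i with h | h
      · rw [h, one_smul]; exact class_red (n i) (m i)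
      · rw [h]
        have e : (-1:ℤ) • mono (n i) (m i) - mono 0 (c i)
            = -(mono (n i) (m i) - mono 0 (c i)) - (2:ℤ) • mono 0 (c i) := by
          simp [two_smul]; abel
        rw [e]
        exact I.sub_mem (I.neg_mem (class_red (n i) (m i))) (two_mem 0 (c i))
    set s0 := Finset.univ.filter (fun i => c i = 0) with hs0
    set s1 := Finset.univ.filter (fun i => ¬ c i = 0) with hs1
    have hcval : ∀ i, c i = 0 ∨ c i = 1 := by
      intro i
      simp only [hc, clv]
      split
      · exact Int.emod_two_eq_zero_or_one (n i)
      · right; rfl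
    have hsplit : (∑ i, mono 0 (c i)) = s0.card • mono 0 0 + s1.card • mono 0 1 := by
      rw [← Finset.sum_filter_add_sum_filter_not Finset.univ (fun i => c i = 0)]
      congr 1
      · rw [Finset.sum_congr rfl (fun i hi => by
          rw [show c i = 0 from (Finset.mem_filter.mp hi).2]), Finset.sum_const]
      · rw [Finset.sum_congr rfl (fun i hi => by
          rw [show c i = 1 from (hcval i).resolve_left (Finset.mem_filter.mp hi).2]),
          Finset.sum_const]
    have hcard : s0.card + s1.card = k := by
      rw [hs0, hs1, Finset.card_filter_add_card_filter_not]
      simp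
    have hpar : Even s0.card ↔ Even s1.card := by
      rw [← hcard] at hk
      rw [Nat.even_add] at hk
      exact hk
    by_cases h0 : Even s0.card
    · left
      have hT : (∑ i, mono 0 (c i)) ∈ I := by
        rw [hsplit]
        exact I.add_mem (even_nsmul_mem h0 0 0) (even_nsmul_mem (hpar.mp h0) 0 1)
      have : (∑ i, ε i • mono (n i) (m i))
          = ((∑ i, ε i • mono (n i) (m i)) - (∑ i, mono 0 (c i))) + (∑ i, mono 0 (c i)) := by abel
      rw [this]
      exact I.add_mem H1 hT
    · right
      have h1 : ¬ Even s1.card := fun h => h0 (hpar.mpr h)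
      obtain ⟨p, hp⟩ := Nat.not_even_iff_odd.mp h0
      obtain ⟨q, hq⟩ := Nat.not_even_iff_odd.mp h1
      have hT : (∑ i, mono 0 (c i)) - (1 + mono 0 1) ∈ I := by
        rw [hsplit, one_eq, hp, hq]
        have e : (2*p+1) • mono 0 0 + (2*q+1) • mono 0 1 - (mono 0 0 + mono 0 1)
            = (2*p) • mono 0 0 + (2*q) • mono 0 1 := by
          rw [succ_nsmul, succ_nsmul]; abel
        rw [e]
        exact I.add_mem (even_nsmul_mem ⟨p, by ring⟩ 0 0) (even_nsmul_mem ⟨q, by ring⟩ 0 1)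
      have : (∑ i, ε i • mono (n i) (m i)) - (1 + mono 0 1)
          = ((∑ i, ε i • mono (n i) (m i)) - (∑ i, mono 0 (c i)))
            + ((∑ i, mono 0 (c i)) - (1 + mono 0 1)) := by abel
      rw [this]
      exact I.add_mem H1 hT

theorem stmt19 :
    (∀ x ∈ I, ev2 x = 0) ∧
    (∀ (k : ℕ) (ε : Fin k → ℤ) (n m : Fin k → ℤ), (∀ i, ε i = 1 ∨ ε i = -1) →
      ev2 (∑ i, ε i • mono (n i) (m i)) = (k : ZMod 2) ∧
      (Even k →
        (∑ i, ε i • mono (n i) (m i)) ∈ I ∨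
        (∑ i, ε i • mono (n i) (m i)) - (1 + mono 0 1) ∈ I)) := by
  refine ⟨fun x hx => ev2_I hx, fun k ε n m hε => stmt19aux k ε n m hε⟩
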